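/- If a controlled-U gate (|0⟩⟨0|⊗I + |1⟩⟨1|⊗U for a unitary U) is in the Clifford Hierarchy, then U is in the Clifford Hierarchy and U^{2^k} = I for some nonnegative integer k. Consequently, any permutation whose cycle structure (on m > k−1 qubits, for a length-k cycle structure) lies in the Clifford Hierarchy must have all non-trivial cycle lengths equal to powers of two: it must be a (2^{k₀}, 2^{k₁}, …, 2^{k_N})-cycle with each kᵢ ≥ 1. -/

import Mathlib

/-- Basis states of `n` qubits. -/
abbrev QState (n : ℕ) := Fin n → ZMod 2

/-- `2^n × 2^n` complex matrices, indexed by basis states of `n` qubits. -/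
abbrev QMat (n : ℕ) := Matrix (QState n) (QState n) ℂ

noncomputable section

namespace CHPaper

/-- Pauli X string: the permutation matrix adding the vector `v` (bit flips). -/
def XStr {n : ℕ} (v : QState n) : QMat n :=
  Matrix.of fun x y => if x = y + v then (1 : ℂ) else 0

/-- Pauli Z string: diagonal sign matrix determined by the vector `v`. -/
def ZStr {n : ℕ} (v : QState n) : QMat n :=
  Matrix.diagonal fun x => (-1 : ℂ) ^ (ZMod.val (∑ i, v i * x i))

/-- The `n`-qubit Pauli group (with phases that are fourth roots of unity). -/
def Pauli (n : ℕ) : Set (QMat n) :=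
  {M | ∃ (c : ℂ) (v w : QState n), c ^ 4 = 1 ∧ M = c • (XStr v * ZStr w)}

/-- The Clifford Hierarchy: level 1 is the Pauli group, and
`U ∈ CH n (k+1)` iff `U` is unitary and conjugates every Pauli into `CH n k`. -/
def CH (n : ℕ) : ℕ → Set (QMat n)
  | 0 => {1}
  | 1 => Pauli n
  | (k+2) => {U | U ∈ Matrix.unitaryGroup (QState n) ℂ ∧
      ∀ P ∈ Pauli n, U * P * star U ∈ CH n (k+1)}

/-- Membership in some finite level of the Clifford Hierarchy. -/
def InCH {n : ℕ} (M : QMat n) : Prop := ∃ k, M ∈ CH n k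

/-- The permutation matrix of a permutation of basis states. -/
def permMat {n : ℕ} (σ : Equiv.Perm (QState n)) : QMat n :=
  Matrix.of fun x y => if x = σ y then (1 : ℂ) else 0

/-- A matrix is a permutation matrix. -/
def IsPermMat {n : ℕ} (M : QMat n) : Prop :=
  ∃ σ : Equiv.Perm (QState n), M = permMat σ

/-- A monomial (generalized permutation) matrix: exactly one nonzero entry in
each row and column. -/
def IsMonomial {n : ℕ} (M : QMat n) : Prop :=
  ∃ (σ : Equiv.Perm (QState n)) (d : QState n → ℂ), (∀ x, d x ≠ 0) ∧
    M = Matrix.of fun x y => if x = σ y then d y else 0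

/-- The controlled-U gate |0⟩⟨0| ⊗ I + |1⟩⟨1| ⊗ U, with control on the first
qubit. -/
def controlled {m : ℕ} (U : QMat m) : QMat (m + 1) :=
  Matrix.of fun x y =>
    if x 0 = 0 then (if y = x then (1 : ℂ) else 0)
    else if y 0 = 1 then U (fun i => x i.succ) (fun i => y i.succ) else 0

theorem Equiv.Perm.apply_inv_self {α : Type*} (f : Equiv.Perm α) (x : α) : f (f⁻¹ x) = x :=
  f.apply_symm_apply x

theorem Equiv.Perm.inv_apply_self {α : Type*} (f : Equiv.Perm α) (x : α) : f⁻¹ (f x) = x :=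
  f.symm_apply_apply x

-- basic perm matrix lemmas
theorem permMat_mul {n : ℕ} (σ τ : Equiv.Perm (QState n)) :
    permMat σ * permMat τ = permMat (σ * τ) := by
  ext x z
  simp only [permMat, Matrix.mul_apply, Matrix.of_apply]
  rw [Finset.sum_eq_single (τ z)]
  · simp [Equiv.Perm.mul_apply]
    congr
  · intro y _ hy; simp [hy]
  · simp

theorem permMat_one {n : ℕ} : permMat (1 : Equiv.Perm (QState n)) = 1 := by
  ext x y
  simp [permMat, Matrix.one_apply]
  congr

theorem star_permMat {n : ℕ} (σ : Equiv.Perm (QState n)) :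
    star (permMat σ) = permMat σ⁻¹ := by
  ext x y
  simp only [Matrix.star_apply, permMat, Matrix.of_apply]
  have h2 : (y = σ x) = (x = σ⁻¹ y) := by
    apply propext; constructor <;> intro h <;> simp [h]
  simp only [h2]
  by_cases h : x = σ⁻¹ y <;> simp [h]

theorem permMat_mem_unitary {n : ℕ} (σ : Equiv.Perm (QState n)) :
    permMat σ ∈ Matrix.unitaryGroup (QState n) ℂ := by
  constructor
  · rw [star_permMat, permMat_mul]; simp [permMat_one]
  · rw [star_permMat, permMat_mul]; simp [permMat_one]

theorem permMat_pow {n : ℕ} (σ : Equiv.Perm (QState n)) (k : ℕ) :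
    permMat σ ^ k = permMat (σ ^ k) := by
  induction k with
  | zero => simp [permMat_one]
  | succ k ih => rw [pow_succ, pow_succ, ih, permMat_mul]

theorem permMat_injective {n : ℕ} : Function.Injective (permMat (n := n)) := by
  intro σ τ h
  refine Equiv.ext fun y => ?_
  have h1 := congrFun (congrFun h (σ y)) y
  simp only [permMat, Matrix.of_apply, if_pos rfl] at h1
  by_contra hc
  rw [if_neg (fun he : σ y = τ y => hc he)] at h1
  exact one_ne_zero h1

-- char 2 facts
theorem qadd_self {n : ℕ} (x : QState n) : x + x = 0 := by
  funext i
  have : ∀ a : ZMod 2, a + a = 0 := by decide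
  exact this (x i)

/-- `f` is affine over F₂ iff it satisfies this 3-term additivity. -/
def IsAff {n : ℕ} (f : QState n → QState n) : Prop :=
  ∀ x y z, f (x + y + z) = f x + f y + f z

theorem IsAff.inv {n : ℕ} {σ : Equiv.Perm (QState n)} (h : IsAff ⇑σ) :
    IsAff ⇑σ⁻¹ := by
  intro x y z
  apply σ.injective
  rw [Equiv.Perm.apply_inv_self, h]
  simp [Equiv.Perm.apply_inv_self]

theorem IsAff.comp {n : ℕ} {f g : QState n → QState n} (hf : IsAff f)
    (hg : IsAff g) : IsAff (f ∘ g) := by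
  intro x y z
  simp [Function.comp, hg x y z, hf (g x) (g y) (g z)]

/-- translation by `v` as a permutation -/
def transl {n : ℕ} (v : QState n) : Equiv.Perm (QState n) :=
  Function.Involutive.toPerm (fun x => x + v)
    (fun x => by show x + v + v = x; rw [add_assoc, qadd_self, add_zero])

@[simp] theorem transl_apply {n : ℕ} (v x : QState n) : transl v x = x + v := rfl

theorem isAff_transl {n : ℕ} (v : QState n) : IsAff ⇑(transl v) := by
  intro x y z
  simp only [transl_apply]
  abel_nf
  rw [show (3 : ℤ) • v = v + (v + v) by abel, qadd_self, add_zero]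

theorem XStr_eq_permMat {n : ℕ} (v : QState n) : XStr v = permMat (transl v) := by
  ext x y
  simp [XStr, permMat]
  congr

theorem conj_XStr {n : ℕ} (σ : Equiv.Perm (QState n)) (h : IsAff ⇑σ)
    (v : QState n) :
    permMat σ * XStr v * star (permMat σ) = XStr (σ v + σ 0) := by
  rw [XStr_eq_permMat, XStr_eq_permMat, star_permMat, permMat_mul, permMat_mul]
  refine congrArg permMat (Equiv.ext fun x => ?_)
  simp only [Equiv.Perm.mul_apply, transl_apply]
  have := h (σ⁻¹ x) v 0
  rw [add_zero] at this
  rw [this, Equiv.Perm.apply_inv_self, add_assoc]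

theorem conj_diagonal {n : ℕ} (σ : Equiv.Perm (QState n)) (d : QState n → ℂ) :
    permMat σ * Matrix.diagonal d * star (permMat σ) =
      Matrix.diagonal (fun x => d (σ⁻¹ x)) := by
  rw [star_permMat]
  ext x z
  rw [Matrix.mul_apply]
  simp only [Matrix.mul_diagonal, permMat, Matrix.of_apply, Matrix.diagonal_apply]
  rw [Finset.sum_eq_single (σ⁻¹ z)]
  · by_cases hxz : x = z <;> simp [Equiv.Perm.apply_inv_self, hxz]
  · intro y _ hy; simp at hy; simp [hy]
  · simp

-- linear functional decomposition
theorem aff_functional {n : ℕ} (f : QState n → ZMod 2)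
    (hf : ∀ x y z, f (x + y + z) = f x + f y + f z) (x : QState n) :
    f x = f 0 + ∑ i, x i * (f (Pi.single i 1) + f 0) := by
  have h2 : ∀ a : ZMod 2, a + a = 0 := by decide
  set g : QState n → ZMod 2 := fun x => f x + f 0 with hg
  have hgadd : ∀ a b, g (a + b) = g a + g b := by
    intro a b
    have := hf a b 0
    rw [add_zero] at this
    simp only [hg]
    rw [this]
    ring
  have hg0 : g 0 = 0 := h2 (f 0)
  let G : QState n →+ ZMod 2 := AddMonoidHom.mk' g hgadd
  have hx : x = ∑ i, Pi.single i (x i) := (Finset.univ_sum_single x).symm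
  have : g x = ∑ i, g (Pi.single i (x i)) := by
    conv_lhs => rw [hx]
    exact map_sum G (fun i => Pi.single i (x i)) Finset.univ
  have hsingle : ∀ i, g (Pi.single i (x i)) = x i * g (Pi.single i 1) := by
    intro i
    have h01 : ∀ a : ZMod 2, a = 0 ∨ a = 1 := by decide
    rcases h01 (x i) with h | h
    · rw [h]; simp [hg0]
    · rw [h]; simp
  simp only [hsingle] at this
  have h3 : f x + f 0 = ∑ i, x i * (f (Pi.single i 1) + f 0) := this
  rw [← h3, show f 0 + (f x + f 0) = f x + (f 0 + f 0) by ring, h2, add_zero]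

theorem zmod01 : ∀ a : ZMod 2, a = 0 ∨ a = 1 := by decide

theorem neg_one_pow_val_add (a b : ZMod 2) :
    ((-1 : ℂ)) ^ (a + b).val = (-1) ^ a.val * (-1) ^ b.val := by
  have e0 : (0 : ZMod 2).val = 0 := rfl
  have e1 : (1 : ZMod 2).val = 1 := rfl
  have e2 : (1 + 1 : ZMod 2) = 0 := by decide
  rcases zmod01 a with h|h <;> rcases zmod01 b with h'|h' <;> subst h <;> subst h' <;>
    simp [e0, e1, e2]

theorem conj_ZStr {n : ℕ} (σ : Equiv.Perm (QState n)) (h : IsAff ⇑σ) (w : QState n) :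
    ∃ (ε : ℂ) (w' : QState n), ε ^ 4 = 1 ∧
      permMat σ * ZStr w * star (permMat σ) = ε • ZStr w' := by
  set f : QState n → ZMod 2 := fun x => ∑ i, w i * σ⁻¹ x i with hfdef
  have hf : ∀ x y z, f (x + y + z) = f x + f y + f z := by
    intro x y z
    simp only [hfdef]
    rw [h.inv x y z, ← Finset.sum_add_distrib, ← Finset.sum_add_distrib]
    apply Finset.sum_congr rfl
    intro i _
    simp only [Pi.add_apply]
    ring
  refine ⟨(-1) ^ (f 0).val, fun i => f (Pi.single i 1) + f 0, ?_, ?_⟩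
  · have e0 : (0 : ZMod 2).val = 0 := rfl
    have e1 : (1 : ZMod 2).val = 1 := rfl
    rcases zmod01 (f 0) with h0|h0 <;> rw [h0] <;> norm_num [e0, e1]
  · rw [ZStr, conj_diagonal]
    ext x y
    simp only [Matrix.diagonal_apply, Matrix.smul_apply, ZStr, smul_eq_mul]
    by_cases hxy : x = y
    · rw [if_pos hxy, if_pos hxy]
      have hfx : f x = f 0 + ∑ i, x i * (f (Pi.single i 1) + f 0) :=
        aff_functional f hf x
      have hsum : (∑ i, (f (Pi.single i 1) + f 0) * x i)
          = ∑ i, x i * (f (Pi.single i 1) + f 0) :=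
        Finset.sum_congr rfl (fun i _ => mul_comm _ _)
      rw [hsum, show (∑ i, w i * σ⁻¹ x i) = f x from rfl, hfx,
        neg_one_pow_val_add]
    · rw [if_neg hxy, if_neg hxy, mul_zero]


theorem conj_mul_split {n : ℕ} (S A B : QMat n) (hu : star S * S = 1) :
    S * (A * B) * star S = (S * A * star S) * (S * B * star S) := by
  have h2 : S * A * star S * (S * B * star S)
      = S * A * (star S * S) * (B * star S) := by
    simp only [mul_assoc]
  rw [h2, hu, mul_one]
  simp only [mul_assoc]

theorem star_mul_permMat_self {n : ℕ} (σ : Equiv.Perm (QState n)) :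
    star (permMat σ) * permMat σ = 1 := by
  rw [star_permMat, permMat_mul, inv_mul_cancel, permMat_one]

theorem pauli_conj {n : ℕ} (σ : Equiv.Perm (QState n)) (h : IsAff ⇑σ) :
    ∀ P ∈ Pauli n, permMat σ * P * star (permMat σ) ∈ Pauli n := by
  rintro P ⟨c, v, w, hc, rfl⟩
  obtain ⟨ε, w', hε, hz⟩ := conj_ZStr σ h w
  refine ⟨c * ε, σ v + σ 0, w', by rw [mul_pow, hc, hε, one_mul], ?_⟩
  rw [Matrix.mul_smul, Matrix.smul_mul,
    conj_mul_split _ _ _ (star_mul_permMat_self σ), conj_XStr σ h, hz,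
    Matrix.mul_smul, smul_smul]

theorem CH_conj {n : ℕ} (σ : Equiv.Perm (QState n)) (h : IsAff ⇑σ) :
    ∀ (k : ℕ) (U : QMat n), U ∈ CH n k →
      permMat σ * U * star (permMat σ) ∈ CH n k := by
  intro k
  induction k using Nat.strong_induction_on with
  | _ k ih =>
    match k with
    | 0 =>
      intro U hU
      have h1 : U = 1 := hU
      show _ ∈ ({1} : Set (QMat n))
      rw [h1, mul_one, star_permMat, permMat_mul, mul_inv_cancel, permMat_one]
      rfl
    | 1 =>
      intro U hU
      exact pauli_conj σ h U hU
    | (k+2) =>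
      intro U hU
      obtain ⟨hUu, hP⟩ := hU
      refine ⟨?_, ?_⟩
      · refine mul_mem (mul_mem (permMat_mem_unitary σ) hUu) ?_
        rw [star_permMat]
        exact permMat_mem_unitary σ⁻¹
      · intro P hPmem
        have hstar : star (permMat σ * U * star (permMat σ))
            = permMat σ * star U * star (permMat σ) := by
          simp only [StarMul.star_mul, star_star, mul_assoc]
        rw [hstar]
        have key : permMat σ * U * star (permMat σ) * P *
              (permMat σ * star U * star (permMat σ))
            = permMat σ * (U * (star (permMat σ) * P * permMat σ) * star U) *
              star (permMat σ) := by
          simp only [mul_assoc]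
        rw [key]
        have hPin : star (permMat σ) * P * permMat σ ∈ Pauli n := by
          rw [star_permMat]
          have := pauli_conj σ⁻¹ h.inv P hPmem
          rwa [star_permMat, inv_inv] at this
        exact ih (k+1) (by omega) _ (hP _ hPin)

theorem InCH_conj {n : ℕ} (σ : Equiv.Perm (QState n)) (h : IsAff ⇑σ)
    {U : QMat n} (hU : InCH U) : InCH (permMat σ * U * star (permMat σ)) := by
  obtain ⟨k, hk⟩ := hU
  exact ⟨k, CH_conj σ h k U hk⟩

/-- dot product of bit vectors -/
def dot {m : ℕ} (a b : QState m) : ZMod 2 := ∑ i, a i * b i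

theorem dot_add {m : ℕ} (a x y : QState m) : dot a (x + y) = dot a x + dot a y := by
  simp only [dot, ← Finset.sum_add_distrib]
  exact Finset.sum_congr rfl fun i _ => by simp [Pi.add_apply]; ring

theorem dot_zero {m : ℕ} (a : QState m) : dot a 0 = 0 := by
  simp [dot]

/-- every set of at most `m` points in F₂^m lies on an affine hyperplane -/
theorem exists_hyperplane {m : ℕ} (S : Finset (QState m)) (hS : S.card ≤ m)
    (hne : S.Nonempty) :
    ∃ (a : QState m) (c : ZMod 2), a ≠ 0 ∧ ∀ s ∈ S, dot a s = c := by
  obtain ⟨s₀, hs₀⟩ := hne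
  have hm1 : 1 ≤ m := le_trans (Finset.card_pos.mpr ⟨s₀, hs₀⟩) hS
  set T : Finset (QState m) := S.image (· + s₀) with hT
  have h0T : (0 : QState m) ∈ T := by
    refine Finset.mem_image.mpr ⟨s₀, hs₀, ?_⟩
    exact qadd_self s₀
  set T' : Finset (QState m) := T.erase 0 with hT'
  have hT'card : T'.card < m := by
    have h1 : T.card ≤ S.card := Finset.card_image_le
    have h2 : T'.card = T.card - 1 := Finset.card_erase_of_mem h0T
    have h3 : 1 ≤ T.card := Finset.card_pos.mpr ⟨0, h0T⟩
    omega
  -- the linear map a ↦ (dot a t)_{t ∈ T'}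
  let A : QState m →ₗ[ZMod 2] (↥T' → ZMod 2) :=
    { toFun := fun a t => dot a (t : QState m)
      map_add' := by
        intro a b
        funext t
        simp only [dot, Pi.add_apply, ← Finset.sum_add_distrib]
        exact Finset.sum_congr rfl fun i _ => by ring
      map_smul' := by
        intro cc a
        funext t
        simp only [dot, Pi.smul_apply, smul_eq_mul, RingHom.id_apply,
          Finset.mul_sum]
        exact Finset.sum_congr rfl fun i _ => by ring }
  have hker : LinearMap.ker A ≠ ⊥ := by
    intro hbot
    have hinj : Function.Injective A := LinearMap.ker_eq_bot.mp hbot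
    have := LinearMap.finrank_le_finrank_of_injective hinj
    have h4 : Fintype.card (Fin m) ≤ Fintype.card {x // x ∈ T'} := by
      simpa [Module.finrank_fintype_fun_eq_card] using this
    rw [Fintype.card_coe, Fintype.card_fin] at h4
    omega
  obtain ⟨a, haker, hane⟩ := Submodule.ne_bot_iff _ |>.mp hker
  have hdot : ∀ t ∈ T', dot a t = 0 := by
    intro t ht
    have := LinearMap.mem_ker.mp haker
    exact congrFun this ⟨t, ht⟩
  refine ⟨a, dot a s₀, hane, ?_⟩
  intro s hs
  have hst : dot a (s + s₀) = 0 := by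
    by_cases h : s + s₀ = 0
    · rw [h, dot_zero]
    · exact hdot _ (Finset.mem_erase.mpr ⟨h, Finset.mem_image.mpr ⟨s, hs, rfl⟩⟩)
  rw [dot_add] at hst
  have h2 : ∀ b : ZMod 2, b + b = 0 := by decide
  calc dot a s = dot a s + (dot a s₀ + dot a s₀) := by rw [h2, add_zero]
  _ = (dot a s + dot a s₀) + dot a s₀ := by ring
  _ = dot a s₀ := by rw [hst, zero_add]

theorem exists_affine_perm {m' : ℕ} (S : Finset (QState (m' + 1)))
    (hS : S.card ≤ m' + 1) (hne : S.Nonempty) :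
    ∃ π : Equiv.Perm (QState (m' + 1)), IsAff ⇑π ∧ ∀ s ∈ S, π s 0 = 1 := by
  have h2 : ∀ b : ZMod 2, b + b = 0 := by decide
  obtain ⟨a, c, hane, hall⟩ := exists_hyperplane S hS hne
  obtain ⟨i₀, hi₀⟩ := Function.ne_iff.mp hane
  have hi : a i₀ = 1 := by
    rcases zmod01 (a i₀) with h | h
    · exact absurd (h.trans rfl) (by simpa using hi₀)
    · exact h
  set L : QState (m' + 1) → QState (m' + 1) :=
    fun x j => if j = i₀ then dot a x else x j with hLdef
  have key : ∀ y : QState (m' + 1),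
      dot a y = y i₀ + ∑ i ∈ Finset.univ.erase i₀, a i * y i := by
    intro y
    rw [dot, ← Finset.add_sum_erase _ _ (Finset.mem_univ i₀), hi, one_mul]
  have hRe : ∀ x, ∑ i ∈ Finset.univ.erase i₀, a i * L x i
      = ∑ i ∈ Finset.univ.erase i₀, a i * x i := by
    intro x
    refine Finset.sum_congr rfl fun i hi' => ?_
    rw [show L x i = x i from if_neg (Finset.mem_erase.mp hi').1]
  have hdotL : ∀ x, dot a (L x) = x i₀ := by
    intro x
    rw [key (L x), hRe, show L x i₀ = dot a x from if_pos rfl, key x,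
      add_assoc, h2, add_zero]
  have hLinv : Function.Involutive L := by
    intro x
    funext j
    by_cases hj : j = i₀
    · subst hj
      show (if j = j then dot a (L x) else (L x) j) = x j
      rw [if_pos rfl, hdotL]
    · show (if j = i₀ then _ else (L x) j) = x j
      rw [if_neg hj]
      exact if_neg hj
  have hLaff : IsAff L := by
    intro x y z
    funext j
    by_cases hj : j = i₀
    · subst hj
      simp [hLdef, Pi.add_apply, dot_add]
    · simp only [hLdef, if_neg hj, Pi.add_apply]
  set Pswap : Equiv.Perm (QState (m' + 1)) :=
    Equiv.arrowCongr (Equiv.swap (0 : Fin (m' + 1)) i₀) (Equiv.refl (ZMod 2))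
    with hPdef
  have hPapp : ∀ x j, Pswap x j = x (Equiv.swap (0 : Fin (m' + 1)) i₀ j) := by
    intro x j
    simp [hPdef, Equiv.arrowCongr, Equiv.swap_apply_def]
  have hPaff : IsAff ⇑Pswap := by
    intro x y z
    funext j
    simp only [hPapp, Pi.add_apply]
  set b : QState (m' + 1) := Pi.single (0 : Fin (m' + 1)) (c + 1) with hbdef
  refine ⟨((Function.Involutive.toPerm L hLinv).trans Pswap).trans (transl b),
    ?_, ?_⟩
  · have : ⇑(((Function.Involutive.toPerm L hLinv).trans Pswap).trans (transl b))
        = ⇑(transl b) ∘ (⇑Pswap ∘ L) := by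
      funext x
      rfl
    rw [this]
    exact (isAff_transl b).comp (hPaff.comp hLaff)
  · intro s hs
    show (Pswap (L s) + b) 0 = 1
    rw [Pi.add_apply, hPapp, Equiv.swap_apply_left,
      show L s i₀ = dot a s from if_pos rfl, hall s hs,
      hbdef, Pi.single_eq_same]
    rw [← add_assoc, h2 c, zero_add]

theorem controlled_of_halfspace {m' : ℕ} (ρ : Equiv.Perm (QState (m' + 1)))
    (hfix : ∀ x, x 0 = 0 → ρ x = x) (hone : ∀ x, x 0 = 1 → (ρ x) 0 = 1) :
    ∃ τ : Equiv.Perm (QState m'), permMat ρ = controlled (permMat τ) ∧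
      ∀ N : ℕ, τ ^ N = 1 → ρ ^ N = 1 := by
  have hone' : ∀ x : QState (m' + 1), x 0 = 1 → (ρ⁻¹ x) 0 = 1 := by
    intro x hx
    rcases zmod01 ((ρ⁻¹ x) 0) with h | h
    · exfalso
      have := hfix _ h
      rw [Equiv.Perm.apply_inv_self] at this
      rw [this, h] at hx
      exact absurd hx (by decide)
    · exact h
  have hcons : ∀ x : QState (m' + 1), x 0 = 1 →
      Fin.cons 1 (Fin.tail x) = x := by
    intro x hx
    rw [← hx]
    exact Fin.cons_self_tail x
  have key1 : ∀ y : QState m',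
      Fin.cons 1 (Fin.tail (ρ (Fin.cons 1 y))) = ρ (Fin.cons 1 y) :=
    fun y => hcons _ (hone _ (by simp))
  have key1' : ∀ y : QState m',
      Fin.cons 1 (Fin.tail (ρ⁻¹ (Fin.cons 1 y))) = ρ⁻¹ (Fin.cons 1 y) :=
    fun y => hcons _ (hone' _ (by simp))
  set τ : Equiv.Perm (QState m') :=
    { toFun := fun y => Fin.tail (ρ (Fin.cons 1 y))
      invFun := fun y => Fin.tail (ρ⁻¹ (Fin.cons 1 y))
      left_inv := by
        intro y
        show Fin.tail (ρ⁻¹ (Fin.cons 1 (Fin.tail (ρ (Fin.cons 1 y))))) = y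
        rw [key1, Equiv.Perm.inv_apply_self, Fin.tail_cons]
      right_inv := by
        intro y
        show Fin.tail (ρ (Fin.cons 1 (Fin.tail (ρ⁻¹ (Fin.cons 1 y))))) = y
        rw [key1', Equiv.Perm.apply_inv_self, Fin.tail_cons] } with hτdef
  have hstep : ∀ y : QState m', ρ (Fin.cons 1 y) = Fin.cons 1 (τ y) :=
    fun y => (key1 y).symm
  refine ⟨τ, ?_, ?_⟩
  · ext x y
    simp only [permMat, controlled, Matrix.of_apply]
    by_cases hx : x 0 = 0
    · rw [if_pos hx]
      by_cases hy0 : y 0 = 0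
      · rw [hfix y hy0]
        by_cases hxy : x = y
        · rw [if_pos hxy, if_pos hxy.symm]
        · rw [if_neg hxy, if_neg fun h => hxy h.symm]
      · have hy1 : y 0 = 1 := (zmod01 _).resolve_left hy0
        have hne1 : ¬ x = ρ y := fun he => by
          rw [he, hone y hy1] at hx
          exact absurd hx (by decide)
        have hne2 : ¬ y = x := fun he => by
          rw [he, hx] at hy1
          exact absurd hy1 (by decide)
        rw [if_neg hne1, if_neg hne2]
    · have hx1 : x 0 = 1 := (zmod01 _).resolve_left hx
      rw [if_neg hx]
      by_cases hy : y 0 = 1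
      · rw [if_pos hy]
        have hτ : τ (fun i => y i.succ) = fun i => ρ y i.succ := by
          show Fin.tail (ρ (Fin.cons 1 (Fin.tail y))) = Fin.tail (ρ y)
          rw [hcons y hy]
        rw [hτ]
        by_cases hxρ : x = ρ y
        · rw [if_pos hxρ, if_pos (by rw [hxρ])]
        · have hne2 : ¬ (fun i : Fin m' => x i.succ) = fun i : Fin m' => ρ y i.succ := fun he => by
            apply hxρ
            funext j
            refine Fin.cases ?_ ?_ j
            · rw [hx1, hone y hy]
            · intro i
              exact congrFun he i
          rw [if_neg hxρ, if_neg hne2]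
      · have hy0 : y 0 = 0 := (zmod01 _).resolve_right hy
        have hne1 : ¬ x = ρ y := fun he => by
          rw [hfix y hy0] at he
          rw [he, hy0] at hx1
          exact absurd hx1 (by decide)
        rw [if_neg hy, if_neg hne1]
  · have hfixpow : ∀ (n : ℕ) x, x 0 = 0 → (ρ ^ n) x = x := by
      intro n
      induction n with
      | zero => intro x _; rfl
      | succ n ih =>
        intro x hx
        rw [pow_succ, Equiv.Perm.mul_apply, hfix x hx, ih x hx]
    have hcons1pow : ∀ (n : ℕ) (y : QState m'),
        (ρ ^ n) (Fin.cons 1 y) = Fin.cons 1 ((τ ^ n) y) := by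
      intro n
      induction n with
      | zero => intro y; rfl
      | succ n ih =>
        intro y
        rw [pow_succ, Equiv.Perm.mul_apply, hstep, ih, pow_succ,
          Equiv.Perm.mul_apply]
    intro N hN
    apply Equiv.ext
    intro x
    rcases zmod01 (x 0) with hx | hx
    · rw [hfixpow N x hx]
      rfl
    · have hx' : x = Fin.cons 1 (Fin.tail x) := (hcons x hx).symm
      rw [hx', hcons1pow, hN]
      simp

/-- assuming the Anderson–Weippert theorem (a controlled-U gate
in the Clifford Hierarchy forces U in the Hierarchy with U^{2^k} = I), any
permutation on m qubits with a length-k cycle structure, m > k - 1, that lies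
in the Clifford Hierarchy has all nontrivial cycle lengths equal to powers of
two (each exponent ≥ 1). -/
theorem cycle_lengths_pow_two_of_in_CH
    (hAW : ∀ (m : ℕ) (U : QMat m), U ∈ Matrix.unitaryGroup (QState m) ℂ →
      InCH (controlled U) → InCH U ∧ ∃ k : ℕ, U ^ (2 ^ k) = 1) :
    ∀ (m : ℕ) (σ : Equiv.Perm (QState m)),
      σ.support.card ≤ m → InCH (permMat σ) →
      ∀ c ∈ σ.cycleFactorsFinset, ∃ j : ℕ, 1 ≤ j ∧ c.support.card = 2 ^ j := by
  intro m σ hcard hInCH c hc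
  obtain ⟨hcyc, hagree⟩ := Equiv.Perm.mem_cycleFactorsFinset_iff.mp hc
  have hsub : c.support ⊆ σ.support := by
    intro a ha
    have h1 : c a ≠ a := Equiv.Perm.mem_support.mp ha
    have h2 : c a = σ a := hagree a ha
    exact Equiv.Perm.mem_support.mpr (h2 ▸ h1)
  have hc2 : 2 ≤ c.support.card := hcyc.two_le_card_support
  have hs2 : 2 ≤ σ.support.card := le_trans hc2 (Finset.card_le_card hsub)
  have hm2 : 2 ≤ m := le_trans hs2 hcard
  obtain ⟨m', rfl⟩ : ∃ m', m = m' + 1 := ⟨m - 1, by omega⟩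
  have hne : σ.support.Nonempty := Finset.card_pos.mp (by omega)
  obtain ⟨π, hπaff, hπ⟩ := exists_affine_perm σ.support hcard hne
  set ρ : Equiv.Perm (QState (m' + 1)) := π * σ * π⁻¹ with hρ
  have hρmat : permMat ρ = permMat π * permMat σ * star (permMat π) := by
    rw [star_permMat, permMat_mul, permMat_mul]
  have hInCHρ : InCH (permMat ρ) := hρmat ▸ InCH_conj π hπaff hInCH
  have hρapp : ∀ x, ρ x = π (σ (π⁻¹ x)) := fun x => rfl
  have hfix : ∀ x, x 0 = 0 → ρ x = x := by
    intro x hx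
    by_contra hne'
    have h1 : σ (π⁻¹ x) ≠ π⁻¹ x := by
      intro h
      apply hne'
      rw [hρapp, h, Equiv.Perm.apply_inv_self]
    have h2 : π⁻¹ x ∈ σ.support := Equiv.Perm.mem_support.mpr h1
    have h3 := hπ _ h2
    rw [Equiv.Perm.apply_inv_self, hx] at h3
    exact absurd h3 (by decide)
  have hone : ∀ x, x 0 = 1 → (ρ x) 0 = 1 := by
    intro x hx
    by_cases h : σ (π⁻¹ x) = π⁻¹ x
    · have : ρ x = x := by rw [hρapp, h, Equiv.Perm.apply_inv_self]
      rw [this, hx]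
    · have h2 : σ (π⁻¹ x) ∈ σ.support :=
        Equiv.Perm.apply_mem_support.mpr (Equiv.Perm.mem_support.mpr h)
      have h3 := hπ _ h2
      rw [hρapp]
      exact h3
  obtain ⟨τ, hmat, hpow⟩ := controlled_of_halfspace ρ hfix hone
  obtain ⟨-, k, hUk⟩ := hAW m' (permMat τ) (permMat_mem_unitary τ)
    (by rw [← hmat]; exact hInCHρ)
  have hτpow : τ ^ (2 ^ k) = 1 := by
    apply permMat_injective
    rw [← permMat_pow, hUk, permMat_one]
  have hρpow : ρ ^ (2 ^ k) = 1 := hpow _ hτpow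
  have hσpow : σ ^ (2 ^ k) = 1 := by
    have h1 : ρ ^ (2 ^ k) = π * σ ^ (2 ^ k) * π⁻¹ := conj_pow
    rw [hρpow] at h1
    calc σ ^ (2 ^ k) = π⁻¹ * (π * σ ^ (2 ^ k) * π⁻¹) * π := by group
    _ = π⁻¹ * 1 * π := by rw [← h1]
    _ = 1 := by group
  have hcagree : ∀ (n : ℕ) (a : QState (m' + 1)), a ∈ c.support →
      (c ^ n) a = (σ ^ n) a := by
    intro n
    induction n with
    | zero => intro a _; rfl
    | succ n ih =>
      intro a ha
      have hca : c a ∈ c.support := Equiv.Perm.apply_mem_support.mpr ha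
      rw [pow_succ, pow_succ, Equiv.Perm.mul_apply, Equiv.Perm.mul_apply,
        hagree a ha, ← hagree a ha, ih (c a) hca, hagree a ha]
  have hcpow : c ^ (2 ^ k) = 1 := by
    apply Equiv.ext
    intro a
    by_cases ha : a ∈ c.support
    · rw [hcagree _ a ha, hσpow]
    · have hfixa : c a = a := Equiv.Perm.notMem_support.mp ha
      rw [Equiv.Perm.pow_apply_eq_self_of_apply_eq_self hfixa]
      rfl
  have hord : orderOf c ∣ 2 ^ k := orderOf_dvd_of_pow_eq_one hcpow
  rw [hcyc.orderOf] at hord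
  obtain ⟨j, hj, hjeq⟩ := (Nat.dvd_prime_pow Nat.prime_two).mp hord
  refine ⟨j, ?_, hjeq⟩
  by_contra hj0
  have hj' : j = 0 := by omega
  rw [hj', pow_zero] at hjeq
  omega
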